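/- Let g : ℝⁿ → ℝⁿ be locally Lipschitz, let U ⊆ ℝⁿ be open and nonempty, and let N ⊆ ℝⁿ be a Lebesgue-null set with N_g ⊆ N. If there exists c ∈ ℝ such that ⟨(dg)(z)ζ, ζ⟩ ≤ c‖ζ‖² for all ζ ∈ ℝⁿ and all z ∈ U ∖ N, then ⟨g(z₁) − g(z₂), z₁ − z₂⟩ ≤ c‖z₁ − z₂‖² for all z₁, z₂ ∈ ℝⁿ such that the segment [z₁,z₂] is contained in U. -/

import Mathlib

open Filter Set MeasureTheory
open scoped RealInnerProductSpace

noncomputable section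

open Metric
open scoped NNReal Topology ENNReal

abbrev Euc (k : ℕ) : Type := EuclideanSpace ℝ (Fin k)

open Metric in
lemma loclip_exists_lipschitzOnWith {α β : Type*} [MetricSpace α] [MetricSpace β]
    {f : α → β} (hf : LocallyLipschitz f) {s : Set α} (hs : IsCompact s) :
    ∃ K : ℝ≥0, LipschitzOnWith K f s := by
  have H : ∀ x : α, ∃ r : ℝ, 0 < r ∧ ∃ K : ℝ≥0, LipschitzOnWith K f (ball x r) := by
    intro x
    obtain ⟨K, t, ht, hK⟩ := hf x
    obtain ⟨r, hr, hball⟩ := Metric.mem_nhds_iff.1 ht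
    exact ⟨r, hr, K, hK.mono hball⟩
  choose r hr K hK using H
  obtain ⟨T, -, hT⟩ := hs.elim_nhds_subcover (fun x => ball x (r x))
    (fun x _ => ball_mem_nhds x (hr x))
  obtain ⟨δ, hδ, hleb⟩ := lebesgue_number_lemma_of_metric (c := fun i : T => ball (i : α) (r i))
    hs (fun i => isOpen_ball) (by intro x hx; simpa using hT hx)
  obtain ⟨M₀, hM₀⟩ := Metric.isBounded_iff.1 (hs.image hf.continuous).isBounded
  set M : ℝ := max M₀ 0 with hM
  set Kmax : ℝ≥0 := T.sup K with hKmax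
  set K₀ : ℝ≥0 := Kmax ⊔ Real.toNNReal (M / δ) with hK₀
  refine ⟨K₀, LipschitzOnWith.of_dist_le_mul fun x hx y hy => ?_⟩
  rcases lt_or_ge (dist x y) δ with h | h
  · obtain ⟨i, hi⟩ := hleb x hx
    have hxi : x ∈ ball (i : α) (r i) := hi (mem_ball_self hδ)
    have hyi : y ∈ ball (i : α) (r i) := hi (by simpa [mem_ball, dist_comm] using h)
    have h1 : dist (f x) (f y) ≤ (K i) * dist x y := (hK i).dist_le_mul x hxi y hyi
    have h2 : (K i : ℝ) ≤ K₀ := by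
      have : K i ≤ Kmax := Finset.le_sup i.2
      exact_mod_cast this.trans le_sup_left
    exact h1.trans (mul_le_mul_of_nonneg_right h2 dist_nonneg)
  · have h1 : dist (f x) (f y) ≤ M :=
      (hM₀ (mem_image_of_mem f hx) (mem_image_of_mem f hy)).trans (le_max_left _ _)
    have hMnn : 0 ≤ M := le_max_right _ _
    have h2 : M ≤ (M / δ) * dist x y := by
      rw [div_mul_eq_mul_div, le_div_iff₀ hδ]
      exact mul_le_mul_of_nonneg_left h hMnn
    have h3 : (M / δ) ≤ (K₀ : ℝ) := by
      have : Real.toNNReal (M / δ) ≤ K₀ := le_sup_right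
      calc (M / δ) = (Real.toNNReal (M / δ) : ℝ) := by
            rw [Real.coe_toNNReal _ (by positivity)]
        _ ≤ K₀ := by exact_mod_cast this
    exact h1.trans (h2.trans (mul_le_mul_of_nonneg_right h3 dist_nonneg))

open Metric in
lemma oneD {f : ℝ → ℝ} {K : ℝ≥0} {a b m : ℝ} (hab : a ≤ b)
    (hf : LipschitzOnWith K f (Icc a b)) {E : Set ℝ} (hE : volume E = 0)
    (hd : ∀ t ∈ Ico a b, t ∉ E → ∃ f', HasDerivAt f f' t ∧ f' ≤ m) :
    f b - f a ≤ m * (b - a) := by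
  have key : ∀ ε > 0, ∀ δ > 0,
      f b - f a ≤ (m + ε) * (b - a) + ((K : ℝ) + |m + ε| + 1) * δ := by
    intro ε hε δ hδ
    set K' : ℝ := (K : ℝ) + |m + ε| + 1 with hK'
    have hK'pos : 0 < K' := by positivity
    obtain ⟨O, hEO, hOopen, hO⟩ := Set.exists_isOpen_lt_of_lt E (ENNReal.ofReal δ)
      (by rw [hE]; exact ENNReal.ofReal_pos.2 hδ)
    set w : ℝ → ℝ := fun t => (volume (O ∩ Ioc a t)).toReal with hw
    have hfin : ∀ t, volume (O ∩ Ioc a t) ≠ ⊤ :=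
      fun t => ((measure_mono inter_subset_left).trans_lt
        (hO.trans ENNReal.ofReal_lt_top)).ne
    have hfin' : ∀ t u, volume (O ∩ Ioc t u) ≠ ⊤ :=
      fun t u => ((measure_mono inter_subset_left).trans_lt
        (hO.trans ENNReal.ofReal_lt_top)).ne
    have hsplit : ∀ t u : ℝ, a ≤ t → t ≤ u →
        w u = w t + (volume (O ∩ Ioc t u)).toReal := by
      intro t u hat htu
      have hdisj : Disjoint (O ∩ Ioc a t) (O ∩ Ioc t u) := by
        apply Disjoint.inter_left' O
        apply Disjoint.inter_right' O
        exact Ioc_disjoint_Ioc_of_le le_rfl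
      have hun : (O ∩ Ioc a t) ∪ (O ∩ Ioc t u) = O ∩ Ioc a u := by
        rw [← inter_union_distrib_left, Ioc_union_Ioc_eq_Ioc hat htu]
      have := measure_union (μ := (volume : Measure ℝ)) hdisj (hOopen.measurableSet.inter measurableSet_Ioc)
      rw [hun] at this
      simp only [hw]
      rw [this, ENNReal.toReal_add (hfin t) (hfin' t u)]
    have hmono : ∀ t u : ℝ, a ≤ t → t ≤ u → w t ≤ w u := by
      intro t u hat htu
      rw [hsplit t u hat htu]
      have : 0 ≤ (volume (O ∩ Ioc t u)).toReal := ENNReal.toReal_nonneg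
      linarith
    have hlip1 : ∀ t u : ℝ, a ≤ t → t ≤ u → w u - w t ≤ u - t := by
      intro t u hat htu
      rw [hsplit t u hat htu]
      have h1 : (volume (O ∩ Ioc t u)).toReal ≤ (volume (Ioc t u)).toReal := by
        apply ENNReal.toReal_mono
        · rw [Real.volume_Ioc]; exact ENNReal.ofReal_ne_top
        · exact measure_mono inter_subset_right
      rw [Real.volume_Ioc, ENNReal.toReal_ofReal (by linarith)] at h1
      linarith
    have hfull : ∀ t u : ℝ, a ≤ t → t ≤ u → Ioc t u ⊆ O → w u - w t = u - t := by
      intro t u hat htu hsub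
      rw [hsplit t u hat htu, inter_eq_self_of_subset_right hsub, Real.volume_Ioc,
        ENNReal.toReal_ofReal (by linarith)]
      ring
    have hw0 : w a = 0 := by simp [hw]
    have hwb : w b ≤ δ := by
      have h1 : volume (O ∩ Ioc a b) ≤ ENNReal.ofReal δ :=
        (measure_mono inter_subset_left).trans hO.le
      calc w b ≤ (ENNReal.ofReal δ).toReal := ENNReal.toReal_mono ENNReal.ofReal_ne_top h1
        _ = δ := ENNReal.toReal_ofReal hδ.le
    have hwcont : ContinuousOn w (Icc a b) := by
      have : LipschitzOnWith 1 w (Icc a b) := by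
        apply LipschitzOnWith.of_dist_le_mul
        intro x hx y hy
        rw [NNReal.coe_one, one_mul, Real.dist_eq, Real.dist_eq]
        rcases le_total x y with h | h
        · rw [abs_sub_comm, abs_of_nonneg (by linarith [hmono x y hx.1 h]),
            abs_sub_comm, abs_of_nonneg (by linarith)]
          linarith [hlip1 x y hx.1 h]
        · rw [abs_of_nonneg (by linarith [hmono y x hy.1 h]), abs_of_nonneg (by linarith)]
          linarith [hlip1 y x hy.1 h]
      exact this.continuousOn
    set s := {t : ℝ | f t - f a ≤ (m + ε) * (t - a) + K' * w t} with hs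
    have s_closed : IsClosed (s ∩ Icc a b) := by
      have A : ContinuousOn (fun t => (f t - f a, (m + ε) * (t - a) + K' * w t)) (Icc a b) :=
        ((hf.continuousOn).sub continuousOn_const).prodMk
          ((continuousOn_const.mul (continuousOn_id.sub continuousOn_const)).add
            (continuousOn_const.mul hwcont))
      simp only [hs, inter_comm]
      exact A.preimage_isClosed_of_isClosed isClosed_Icc OrderClosedTopology.isClosed_le'
    have main : Icc a b ⊆ s := by
      apply s_closed.Icc_subset_of_forall_exists_gt
      · simp only [hs, mem_setOf_eq, sub_self, hw0]
        linarith
      · rintro t ⟨hts, hta, htb⟩ y hy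
        by_cases htO : t ∈ O
        · obtain ⟨ρ, hρ, hball⟩ := Metric.isOpen_iff.1 hOopen t htO
          set x := min (min y b) (t + ρ / 2) with hx
          have hx1 : t < x := lt_min (lt_min hy htb) (by linarith)
          have hxb : x ≤ b := le_trans (min_le_left _ _) (min_le_right _ _)
          have hxy : x ≤ y := le_trans (min_le_left _ _) (min_le_left _ _)
          have hIoc : Ioc t x ⊆ O := by
            intro u hu
            apply hball
            rw [mem_ball, Real.dist_eq, abs_of_pos (by linarith [hu.1])]
            have : u ≤ t + ρ / 2 := hu.2.trans (min_le_right _ _)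
            linarith
          refine ⟨x, ?_, hx1, hxy⟩
          have hfw := hfull t x hta hx1.le hIoc
          have hflip : f x - f t ≤ (K : ℝ) * (x - t) := by
            have h0 := hf.dist_le_mul x ⟨hta.trans hx1.le, hxb⟩ t ⟨hta, htb.le⟩
            rw [Real.dist_eq, Real.dist_eq] at h0
            have hxt' : |x - t| = x - t := abs_of_pos (by linarith)
            rw [hxt'] at h0
            calc f x - f t ≤ |f x - f t| := le_abs_self _
              _ ≤ (K : ℝ) * (x - t) := h0
          simp only [hs, mem_setOf_eq] at hts ⊢
          have habs : -(|m + ε|) ≤ m + ε := neg_abs_le _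
          nlinarith [hx1.le]
        · have htE : t ∉ E := fun h => htO (hEO h)
          obtain ⟨f', hf', hf'm⟩ := hd t ⟨hta, htb⟩ htE
          have hsl : ∀ᶠ u in 𝓝[>] t, slope f t u < m + ε := by
            have h1 : Tendsto (slope f t) (𝓝[≠] t) (𝓝 f') :=
              hasDerivAt_iff_tendsto_slope.1 hf'
            have h2 : ∀ᶠ u in 𝓝[≠] t, slope f t u < m + ε :=
              h1.eventually_lt_const (by linarith)
            exact h2.filter_mono (nhdsWithin_mono t fun u hu => ne_of_gt hu)
          have h4 : ∀ᶠ u in 𝓝[>] t, u ∈ Ioc t (min y b) :=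
            Ioc_mem_nhdsGT_of_mem ⟨le_rfl, lt_min hy htb⟩
          obtain ⟨x, hslope, hxm⟩ := (hsl.and h4).exists
          have hxt : t < x := hxm.1
          have hxyb : x ≤ min y b := hxm.2
          refine ⟨x, ?_, hxt, hxyb.trans (min_le_left _ _)⟩
          have hfx : f x - f t ≤ (m + ε) * (x - t) := by
            rw [slope_def_field, div_lt_iff₀ (by linarith)] at hslope
            linarith
          have hwm : w t ≤ w x := hmono t x hta hxt.le
          simp only [hs, mem_setOf_eq] at hts ⊢
          have : K' * w t ≤ K' * w x := mul_le_mul_of_nonneg_left hwm hK'pos.le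
          nlinarith
    have hb : b ∈ s := main (right_mem_Icc.2 hab)
    simp only [hs, mem_setOf_eq] at hb
    have : K' * w b ≤ K' * δ := mul_le_mul_of_nonneg_left hwb hK'pos.le
    linarith
  have key2 : ∀ ε > 0, f b - f a ≤ (m + ε) * (b - a) := by
    intro ε hε
    apply le_of_forall_pos_le_add
    intro η hη
    have C : (0:ℝ) < (K : ℝ) + |m + ε| + 1 := by positivity
    have := key ε hε (η / ((K : ℝ) + |m + ε| + 1)) (by positivity)
    calc f b - f a ≤ (m + ε) * (b - a) + ((K : ℝ) + |m + ε| + 1) *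
          (η / ((K : ℝ) + |m + ε| + 1)) := this
      _ = (m + ε) * (b - a) + η := by field_simp
  apply le_of_forall_pos_le_add
  intro η hη
  have hba : (0:ℝ) ≤ b - a := by linarith
  have := key2 (η / (b - a + 1)) (by positivity)
  have h2 : (η / (b - a + 1)) * (b - a) ≤ η := by
    rw [div_mul_eq_mul_div, div_le_iff₀ (by linarith)]
    nlinarith
  nlinarith

open Metric in
lemma ae_slice_null {n : ℕ} (v : Euc n) {N' : Set (Euc n)} (hm : MeasurableSet N')
    (h0 : volume N' = 0) :
    ∀ᵐ w : Euc n, volume {t : ℝ | w + t • v ∈ N'} = 0 := by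
  set S : Set (Euc n × ℝ) := {p | p.1 + p.2 • v ∈ N'} with hS
  have hcont : Continuous fun p : Euc n × ℝ => p.1 + p.2 • v :=
    continuous_fst.add (continuous_snd.smul continuous_const)
  have hSm : MeasurableSet S := hm.preimage hcont.measurable
  have hSnull : ((volume : Measure (Euc n)).prod (volume : Measure ℝ)) S = 0 := by
    rw [Measure.prod_apply_symm hSm]
    have hz : ∀ t : ℝ, volume ((fun w : Euc n => (w, t)) ⁻¹' S) = 0 := by
      intro t
      have he : ((fun w : Euc n => (w, t)) ⁻¹' S) = (fun w : Euc n => w + t • v) ⁻¹' N' := rfl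
      rw [he, measure_preimage_add_right]
      exact h0
    simp [hz]
  have := MeasureTheory.Measure.measure_ae_null_of_prod_null hSnull
  filter_upwards [this] with w hw using hw

/-- If `g : ℝⁿ → ℝⁿ` is locally Lipschitz, `U` is open and nonempty, `N` is a null set
containing the set of points of non-differentiability of `g`, and
`⟨(dg)(z) ζ, ζ⟩ ≤ c ‖ζ‖²` for all `ζ` and all `z ∈ U \ N`, then
`⟨g z₁ - g z₂, z₁ - z₂⟩ ≤ c ‖z₁ - z₂‖²` whenever `[z₁, z₂] ⊆ U`. -/
theorem inner_sub_le_of_fderiv_bound {n : ℕ} (g : Euc n → Euc n)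
    (hg : LocallyLipschitz g) (U : Set (Euc n)) (hU : IsOpen U) (hUne : U.Nonempty)
    (N : Set (Euc n)) (hNnull : volume N = 0)
    (hNg : {z : Euc n | ¬ DifferentiableAt ℝ g z} ⊆ N)
    (c : ℝ)
    (hbd : ∀ z ∈ U \ N, ∀ ζ : Euc n, ⟪(fderiv ℝ g z) ζ, ζ⟫ ≤ c * ‖ζ‖ ^ 2) :
    ∀ z₁ z₂ : Euc n, segment ℝ z₁ z₂ ⊆ U →
      ⟪g z₁ - g z₂, z₁ - z₂⟫ ≤ c * ‖z₁ - z₂‖ ^ 2 := by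
  intro z₁ z₂ hseg
  rcases eq_or_ne z₁ z₂ with rfl | hne
  · simp
  set v : Euc n := z₁ - z₂ with hv
  -- the segment is compact
  have hSc : IsCompact (segment ℝ z₁ z₂) := by
    rw [segment_eq_image]
    exact isCompact_Icc.image (by fun_prop)
  obtain ⟨r, hr, hthick⟩ := hSc.exists_thickening_subset_open hU hseg
  set C : Set (Euc n) := cthickening (r / 2) (segment ℝ z₁ z₂) with hC
  have hCc : IsCompact C := hSc.cthickening
  have hCU : C ⊆ U :=
    (cthickening_subset_thickening' hr (by linarith) _).trans hthick
  obtain ⟨K, hK⟩ := loclip_exists_lipschitzOnWith hg hCc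
  set N' := toMeasurable volume N with hN'
  have hN'm : MeasurableSet N' := measurableSet_toMeasurable _ _
  have hN'0 : volume N' = 0 := by rw [measure_toMeasurable]; exact hNnull
  have hNN' : N ⊆ N' := subset_toMeasurable _ _
  -- continuity of the key functional
  have hgc : Continuous g := hg.continuous
  have hFc : Continuous fun w : Euc n => ⟪g (w + v) - g w, v⟫ :=
    ((hgc.comp (continuous_id.add continuous_const)).sub hgc).inner continuous_const
  have hkey : z₂ ∈ {w : Euc n | ⟪g (w + v) - g w, v⟫ ≤ c * ‖v‖ ^ 2} := by
    have hclosed : IsClosed {w : Euc n | ⟪g (w + v) - g w, v⟫ ≤ c * ‖v‖ ^ 2} :=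
      isClosed_le hFc continuous_const
    rw [← hclosed.closure_eq]
    rw [Metric.mem_closure_iff]
    intro ε hε
    set ε' : ℝ := min ε (r / 2) with hε'
    have hε'pos : 0 < ε' := lt_min hε (by linarith)
    -- find a good translate
    have hG := ae_slice_null v hN'm hN'0
    obtain ⟨w, hwball, hwnull⟩ :
        ∃ w ∈ ball z₂ ε', volume {t : ℝ | w + t • v ∈ N'} = 0 := by
      by_contra h
      push_neg at h
      have hsub : ball z₂ ε' ⊆ {w : Euc n | ¬ volume {t : ℝ | w + t • v ∈ N'} = 0} :=
        fun w hw => h w hw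
      have h1 : volume (ball z₂ ε') = 0 :=
        le_antisymm ((measure_mono hsub).trans (ae_iff.1 hG).le) zero_le
      exact (measure_ball_pos volume z₂ hε'pos).ne' h1
    have hd1 : dist z₂ w < ε' := by rw [dist_comm]; exact mem_ball.1 hwball
    refine ⟨w, ?_, hd1.trans_le (min_le_left _ _)⟩
    -- membership of the translated segment in C
    have hmem : ∀ t ∈ Icc (0:ℝ) 1, w + t • v ∈ C := by
      intro t ht
      have hseg' : z₂ + t • v ∈ segment ℝ z₁ z₂ := by
        rw [segment_symm, segment_eq_image']
        exact ⟨t, ht, rfl⟩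
      apply mem_cthickening_of_dist_le (w + t • v) (z₂ + t • v) _ _ hseg'
      rw [dist_add_right]
      have h5 : dist w z₂ < ε' := mem_ball.1 hwball
      exact h5.le.trans (min_le_right _ _)
    -- the 1D function
    set L : Euc n →L[ℝ] ℝ := (innerSL ℝ (E := Euc n)).flip v with hL
    have hLa : ∀ u : Euc n, L u = ⟪u, v⟫ := fun u => rfl
    set φ : ℝ → ℝ := fun t => ⟪g (w + t • v), v⟫ with hφ
    have hγlip : LipschitzWith ‖v‖₊ (fun t : ℝ => w + t • v) := by
      apply LipschitzWith.of_dist_le_mul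
      intro t u
      simp only [dist_eq_norm]
      have : w + t • v - (w + u • v) = (t - u) • v := by
        rw [sub_smul]; abel
      rw [this, norm_smul, coe_nnnorm, mul_comm]
    have hφlip : LipschitzOnWith (‖L‖₊ * (K * ‖v‖₊)) φ (Icc 0 1) := by
      have h1 : LipschitzOnWith (K * ‖v‖₊) (g ∘ fun t : ℝ => w + t • v) (Icc 0 1) :=
        hK.comp hγlip.lipschitzOnWith (fun t ht => hmem t ht)
      exact L.lipschitz.comp_lipschitzOnWith h1
    have hder : ∀ t ∈ Ico (0:ℝ) 1, t ∉ {t : ℝ | w + t • v ∈ N'} →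
        ∃ f', HasDerivAt φ f' t ∧ f' ≤ c * ‖v‖ ^ 2 := by
      intro t ht htE
      set p : Euc n := w + t • v with hp
      have hpC : p ∈ C := hmem t ⟨ht.1, ht.2.le⟩
      have hpU : p ∈ U := hCU hpC
      have hpN : p ∉ N := fun h => htE (hNN' h)
      have hdiff : DifferentiableAt ℝ g p := by
        by_contra h
        exact hpN (hNg h)
      have hγ : HasDerivAt (fun t : ℝ => w + t • v) v t := by
        have h1 : HasDerivAt (fun t : ℝ => t • v) ((1:ℝ) • v) t :=
          (hasDerivAt_id t).smul_const v
        rw [one_smul] at h1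
        exact h1.const_add w
      have h2 : HasDerivAt (fun t : ℝ => g (w + t • v)) (fderiv ℝ g p v) t :=
        hdiff.hasFDerivAt.comp_hasDerivAt t hγ
      have h3 : HasDerivAt φ (L (fderiv ℝ g p v)) t :=
        (L.hasFDerivAt.comp_hasDerivAt t h2 : _)
      refine ⟨L (fderiv ℝ g p v), h3, ?_⟩
      rw [hLa]
      exact hbd p ⟨hpU, hpN⟩ v
    have := oneD (by norm_num : (0:ℝ) ≤ 1) hφlip hwnull hder
    simp only [hφ, one_smul, zero_smul, add_zero] at this
    have heq : ⟪g (w + v) - g w, v⟫ = ⟪g (w + v), v⟫ - ⟪g w, v⟫ := inner_sub_left _ _ _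
    simp only [mem_setOf_eq]
    rw [heq]
    linarith [this]
  have hz : z₂ + v = z₁ := by rw [hv]; abel
  simp only [mem_setOf_eq] at hkey
  rw [hz] at hkey
  exact hkey
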